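/- Let b ≤ d be real numbers and let 𝟙_{[b,d)} : ℝ → ℝ denote the indicator function of the half-open interval [b,d). Then for every t ∈ ℝ, ½ · (𝟙_{[b,d)} ∗ 𝟙_{[b,d)})(2t) = max(0, min(t − b, d − t)), where ∗ denotes convolution with respect to Lebesgue measure. -/

import Mathlib

open MeasureTheory

/-- Rescaling the self-convolution of the indicator function of
`[b, d)` (for `b ≤ d`) recovers the tent function `t ↦ max 0 (min (t - b) (d - t))`
used in standard persistence landscapes:
`½ · (𝟙_{[b,d)} ∗ 𝟙_{[b,d)})(2t) = max 0 (min (t − b) (d − t))`. -/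
theorem half_convolution_indicator_Ico_self_eq_tent (b d : ℝ) (hbd : b ≤ d) (t : ℝ) :
    (1 / 2) * convolution (Set.indicator (Set.Ico b d) (fun _ => (1 : ℝ)))
        (Set.indicator (Set.Ico b d) (fun _ => (1 : ℝ)))
        (ContinuousLinearMap.mul ℝ ℝ) volume (2 * t) =
      max 0 (min (t - b) (d - t)) := by
  set S : Set ℝ := Set.Ico b d ∩ Set.Ioc (2 * t - d) (2 * t - b) with hS
  have key : ∀ τ : ℝ, (ContinuousLinearMap.mul ℝ ℝ)
      ((Set.Ico b d).indicator (fun _ => (1 : ℝ)) τ)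
      ((Set.Ico b d).indicator (fun _ => (1 : ℝ)) (2 * t - τ)) = S.indicator 1 τ := by
    intro τ
    have h2 : (Set.Ico b d).indicator (fun _ => (1 : ℝ)) (2 * t - τ)
        = (Set.Ioc (2 * t - d) (2 * t - b)).indicator (fun _ => (1 : ℝ)) τ := by
      simp only [Set.indicator_apply, Set.mem_Ico, Set.mem_Ioc]
      refine if_congr ?_ rfl rfl
      constructor
      · rintro ⟨ha, hb⟩; exact ⟨by linarith, by linarith⟩
      · rintro ⟨ha, hb⟩; exact ⟨by linarith, by linarith⟩
    rw [ContinuousLinearMap.mul_apply', h2, ← Set.inter_indicator_mul]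
    simp [hS, Set.indicator_apply]
  have hint : convolution (Set.indicator (Set.Ico b d) (fun _ => (1 : ℝ)))
        (Set.indicator (Set.Ico b d) (fun _ => (1 : ℝ)))
        (ContinuousLinearMap.mul ℝ ℝ) volume (2 * t)
      = ∫ τ : ℝ, S.indicator 1 τ := by
    rw [convolution]
    simp only [key]
  have hvol : (volume S).toReal = max (min d (2 * t - b) - max b (2 * t - d)) 0 := by
    have hsub1 : Set.Ioo (max b (2 * t - d)) (min d (2 * t - b)) ⊆ S := by
      rintro x ⟨hx1, hx2⟩
      simp only [lt_min_iff, max_lt_iff] at hx1 hx2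
      exact ⟨⟨hx1.1.le, hx2.1⟩, hx1.2, hx2.2.le⟩
    have hsub2 : S ⊆ Set.Icc (max b (2 * t - d)) (min d (2 * t - b)) := by
      rintro x ⟨⟨h1, h2⟩, h3, h4⟩
      exact ⟨max_le h1 h3.le, le_min h2.le h4⟩
    have h1 := measure_mono (μ := volume) hsub1
    have h2 := measure_mono (μ := volume) hsub2
    rw [Real.volume_Ioo] at h1
    rw [Real.volume_Icc] at h2
    have hv : volume S = ENNReal.ofReal (min d (2 * t - b) - max b (2 * t - d)) :=
      le_antisymm h2 h1
    rw [hv]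
    rcases le_total 0 (min d (2 * t - b) - max b (2 * t - d)) with h | h
    · rw [ENNReal.toReal_ofReal h, max_eq_left h]
    · rw [ENNReal.ofReal_eq_zero.mpr h, max_eq_right h]
      simp
  rw [hint, MeasureTheory.integral_indicator_one (measurableSet_Ico.inter measurableSet_Ioc),
    measureReal_def, hvol]
  rcases le_total (t - b) (d - t) with h | h
  · rw [min_eq_right (by linarith : 2 * t - b ≤ d), max_eq_left (by linarith : 2 * t - d ≤ b),
      min_eq_left h]
    rcases le_total (t - b) 0 with h0 | h0
    · rw [max_eq_right (by linarith), max_eq_left (by linarith)]; ring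
    · rw [max_eq_left (by linarith), max_eq_right h0]; ring
  · rw [min_eq_left (by linarith : d ≤ 2 * t - b), max_eq_right (by linarith : b ≤ 2 * t - d),
      min_eq_right h]
    rcases le_total (d - t) 0 with h0 | h0
    · rw [max_eq_right (by linarith), max_eq_left (by linarith)]; ring
    · rw [max_eq_left (by linarith), max_eq_right h0]; ring
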